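/- For the 2-graph with one vertex, edges e₁,e₂ (blue) and f₁,f₂ (red), and factorization rules identifying Z(eᵢ) with Z(fᵢ), the periodicity group equals ℤ·(1,−1): it contains (1,−1), and contains no element outside ℤ(1,−1). -/
import Mathlib


lemma shift_eq_imp (m n : ℕ)
    (h : ∀ x : ℕ → Fin 2, (fun i => x (i + m)) = (fun i => x (i + n))) : m = n := by
  by_contra hne
  have := congrFun (h (fun i => if i = m then 1 else 0)) 0
  simp only [Nat.zero_add] at this
  simp [hne, Ne.symm hne] at this

/-- For the 2-graph with one vertex, two blue and two red edges with `Z(eᵢ) = Z(fᵢ)`,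
the infinite path space is the full binary shift `(Fin 2)^ℕ` and the shift by degree
`(a, b) ∈ ℕ²` is the shift of symbol sequences by `a + b`.  The periodicity group
`{d(λ) − d(ν) : σ^{d(λ)} x = σ^{d(ν)} x for all x}` equals `ℤ·(1, −1)`. -/
theorem stmt18 :
    {p : ℤ × ℤ | ∃ a b c d : ℕ, p = ((a : ℤ) - c, (b : ℤ) - d) ∧
        ∀ x : ℕ → Fin 2, (fun i => x (i + (a + b))) = (fun i => x (i + (c + d)))}
      = {p : ℤ × ℤ | ∃ z : ℤ, p = (z, -z)} := by
  ext p
  constructor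
  · rintro ⟨a, b, c, d, rfl, h⟩
    have hs : a + b = c + d := shift_eq_imp _ _ h
    refine ⟨(a : ℤ) - c, ?_⟩
    have : (a : ℤ) + b = (c : ℤ) + d := by exact_mod_cast congrArg (Nat.cast : ℕ → ℤ) hs
    have hb : (b : ℤ) - d = -((a : ℤ) - c) := by linarith
    rw [hb]
  · rintro ⟨z, rfl⟩
    rcases le_or_gt 0 z with hz | hz
    · refine ⟨z.toNat, 0, 0, z.toNat, ?_, fun x => by rw [Nat.add_comm]⟩
      simp [Int.toNat_of_nonneg hz]
    · refine ⟨0, z.natAbs, z.natAbs, 0, ?_, fun x => by rw [Nat.add_comm]⟩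
      have : ((z.natAbs : ℤ)) = -z := by omega
      simp [this]
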